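/- Let Γ be a nonempty set, let X be a closed linear subspace of ℓ∞(Γ) (the space of bounded real-valued functions on Γ with the supremum norm), let Y be a real Banach space, let ε ≥ 0, and let f : X → Y be a standard ε-isometry. Then there exists a bounded linear operator S : Y → ℓ∞(Γ) with ‖S‖ ≤ 1 such that ‖S(f(x)) − x‖ ≤ 4ε for all x ∈ X. -/

import Mathlib

open scoped ENNReal ZeroAtInfty

noncomputable section

set_option linter.unusedSectionVars false
set_option maxHeartbeats 1000000


/-- `f : X → Y` is a *standard ε-isometry*: `f 0 = 0` and
`|‖f x - f y‖ - ‖x - y‖| ≤ ε` for all `x, y`. -/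
def StdEpsIsom {X Y : Type*} [NormedAddCommGroup X] [NormedAddCommGroup Y]
    (ε : ℝ) (f : X → Y) : Prop :=
  f 0 = 0 ∧ ∀ x y : X, |‖f x - f y‖ - ‖x - y‖| ≤ ε

/-- `L(f)`: the closed linear span of the range of `f` in `Y`. -/
def Lf {X Y : Type*} [NormedAddCommGroup Y] [NormedSpace ℝ Y] (f : X → Y) :
    Submodule ℝ Y :=
  (Submodule.span ℝ (Set.range f)).topologicalClosure

theorem mem_Lf {X Y : Type*} [NormedAddCommGroup Y] [NormedSpace ℝ Y] (f : X → Y) (x : X) :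
    f x ∈ Lf f :=
  Submodule.le_topologicalClosure _ (Submodule.subset_span ⟨x, rfl⟩)

/-- A standard ε-isometry `f` is *stable* if for some `α, γ > 0` there is a bounded linear
operator `T : L(f) → X` with `‖T‖ ≤ α` such that `‖T (f x) - x‖ ≤ γ ε` for all `x`. -/
def IsStable {X Y : Type*} [NormedAddCommGroup X] [NormedSpace ℝ X]
    [NormedAddCommGroup Y] [NormedSpace ℝ Y] (ε : ℝ) (f : X → Y) : Prop :=
  ∃ α γ : ℝ, 0 < α ∧ 0 < γ ∧
    ∃ T : Lf f →L[ℝ] X, ‖T‖ ≤ α ∧ ∀ x : X, ‖T ⟨f x, mem_Lf f x⟩ - x‖ ≤ γ * ε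

/-- The pair `(X, Y)` is *stable* if every standard ε-isometry `f : X → Y` (ε > 0) is stable. -/
def PairStable (X Y : Type*) [NormedAddCommGroup X] [NormedSpace ℝ X]
    [NormedAddCommGroup Y] [NormedSpace ℝ Y] : Prop :=
  ∀ ε : ℝ, 0 < ε → ∀ f : X → Y, StdEpsIsom ε f → IsStable ε f

section AuxCDZ
open Filter Topology

section DerivFacts

variable {E : Type*} [NormedAddCommGroup E] [NormedSpace ℝ E]

lemma hasDerivAt_norm_dir {u : E} {L : E →L[ℝ] ℝ} (h : HasFDerivAt (‖·‖) L u) (w : E) :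
    HasDerivAt (fun s : ℝ => ‖u + s • w‖) (L w) 0 := by
  have hinner : HasDerivAt (fun s : ℝ => u + s • w) w (0 : ℝ) := by
    simpa using ((hasDerivAt_id (0 : ℝ)).smul_const w).const_add u
  have h' : HasFDerivAt (‖·‖) L (u + (0:ℝ) • w) := by simpa using h
  exact h'.comp_hasDerivAt (0 : ℝ) hinner

lemma fderiv_norm_bound {u : E} {L : E →L[ℝ] ℝ} (h : HasFDerivAt (‖·‖) L u) (w : E) :
    |L w| ≤ ‖w‖ := by
  have hd := (hasDerivAt_norm_dir h w)
  have hs : Tendsto (slope (fun s : ℝ => ‖u + s • w‖) 0) (𝓝[≠] (0:ℝ)) (𝓝 (L w)) :=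
    hasDerivAt_iff_tendsto_slope.mp hd
  refine le_of_tendsto hs.abs ?_
  filter_upwards [self_mem_nhdsWithin] with s hs0
  have hs0' : s ≠ 0 := hs0
  have h1 : |‖u + s • w‖ - ‖u + (0:ℝ) • w‖| ≤ ‖(u + s • w) - (u + (0:ℝ) • w)‖ :=
    abs_norm_sub_norm_le _ _
  have h2 : ‖(u + s • w) - (u + (0:ℝ) • w)‖ = |s| * ‖w‖ := by
    simp [norm_smul, Real.norm_eq_abs]
  rw [slope_def_field, abs_div]
  rw [div_le_iff₀ (by simpa [abs_pos, sub_eq_self] using hs0')]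
  calc |‖u + s • w‖ - ‖u + (0:ℝ) • w‖| ≤ |s| * ‖w‖ := h1.trans_eq h2
    _ = ‖w‖ * |s - 0| := by rw [sub_zero]; ring

lemma fderiv_norm_self {u : E} {L : E →L[ℝ] ℝ} (h : HasFDerivAt (‖·‖) L u) :
    L u = ‖u‖ := by
  have h1 : HasDerivAt (fun s : ℝ => ‖u + s • u‖) (L u) 0 := hasDerivAt_norm_dir h u
  have h2 : HasDerivAt (fun s : ℝ => (1 + s) * ‖u‖) ‖u‖ 0 := by
    simpa using ((hasDerivAt_id (0 : ℝ)).const_add 1).mul_const ‖u‖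
  have heq : (fun s : ℝ => ‖u + s • u‖) =ᶠ[𝓝 (0:ℝ)] (fun s : ℝ => (1 + s) * ‖u‖) := by
    filter_upwards [Metric.ball_mem_nhds (0:ℝ) one_pos] with s hsb
    have hs1 : |s| < 1 := by simpa [Real.dist_eq] using hsb
    have : u + s • u = (1 + s) • u := by rw [add_smul, one_smul]
    rw [this, norm_smul, Real.norm_eq_abs, abs_of_pos (by linarith [abs_lt.mp hs1 |>.1])]
  exact (h1.congr_of_eventuallyEq heq.symm).unique h2

lemma eventually_norm_smul_le {u : E} {L : E →L[ℝ] ℝ} (h : HasFDerivAt (‖·‖) L u) (w : E)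
    {δ : ℝ} (hδ : 0 < δ) :
    ∀ᶠ s in 𝓝[>] (0:ℝ), ‖u + s • w‖ ≤ ‖u‖ + s * (L w + δ) := by
  have hs : Tendsto (slope (fun s : ℝ => ‖u + s • w‖) 0) (𝓝[≠] (0:ℝ)) (𝓝 (L w)) :=
    hasDerivAt_iff_tendsto_slope.mp (hasDerivAt_norm_dir h w)
  have hmono : 𝓝[>] (0:ℝ) ≤ 𝓝[≠] (0:ℝ) :=
    nhdsWithin_mono _ (fun s hs => ne_of_gt hs)
  have hev : ∀ᶠ s in 𝓝[>] (0:ℝ), slope (fun s : ℝ => ‖u + s • w‖) 0 s < L w + δ :=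
    (hs.mono_left hmono).eventually_lt_const (by linarith)
  filter_upwards [hev, self_mem_nhdsWithin] with s hslope hs0
  have hs0' : (0:ℝ) < s := hs0
  rw [slope_def_field] at hslope
  have := (div_lt_iff₀ (by simpa using hs0')).mp (by simpa using hslope)
  nlinarith [this]

end DerivFacts

section Helpers

variable {X : Type*} [NormedAddCommGroup X] [NormedSpace ℝ X]
variable {Y : Type*} [NormedAddCommGroup Y] [NormedSpace ℝ Y]

lemma StdEpsIsom.norm_sub_le {ε : ℝ} {f : X → Y} (hf : StdEpsIsom ε f) (x y : X) :
    ‖f x - f y‖ ≤ ‖x - y‖ + ε := by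
  have := abs_le.mp (hf.2 x y); linarith [this.2]

lemma StdEpsIsom.le_norm_sub {ε : ℝ} {f : X → Y} (hf : StdEpsIsom ε f) (x y : X) :
    ‖x - y‖ - ε ≤ ‖f x - f y‖ := by
  have := abs_le.mp (hf.2 x y); linarith [this.1]

lemma StdEpsIsom.norm_le {ε : ℝ} {f : X → Y} (hf : StdEpsIsom ε f) (x : X) :
    ‖f x‖ ≤ ‖x‖ + ε := by
  have := hf.norm_sub_le x 0
  simpa [hf.1] using this

lemma eventually_list {α : Type*} {F : Filter ℝ} (l : List α) (P : α → ℝ → Prop)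
    (h : ∀ a ∈ l, ∀ᶠ s in F, P a s) : ∀ᶠ s in F, ∀ a ∈ l, P a s := by
  induction l with
  | nil => simp
  | cons a t ih =>
    have h1 := h a (List.mem_cons_self)
    have h2 := ih (fun b hb => h b (List.mem_cons_of_mem a hb))
    filter_upwards [h1, h2] with s hs1 hs2
    intro b hb
    rcases List.mem_cons.mp hb with rfl | hb
    · exact hs1
    · exact hs2 b hb

lemma list_sum_bound {l : List (ℝ × X)} {G H : X → ℝ} {B : ℝ}
    (h : ∀ p ∈ l, |G p.2 - H p.2| ≤ B) :
    (l.map fun p => p.1 * H p.2).sum - B * (l.map fun p => |p.1|).sum ≤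
      (l.map fun p => p.1 * G p.2).sum := by
  induction l with
  | nil => simp
  | cons a t ih =>
    have ha := h a (List.mem_cons_self)
    have ht := ih (fun p hp => h p (List.mem_cons_of_mem a hp))
    simp only [List.map_cons, List.sum_cons]
    have : a.1 * H a.2 - B * |a.1| ≤ a.1 * G a.2 := by
      rcases abs_le.mp ha with ⟨h1, h2⟩
      rcases le_or_gt 0 a.1 with hc | hc
      · have : |a.1| = a.1 := abs_of_nonneg hc
        nlinarith
      · have : |a.1| = -a.1 := abs_of_neg hc
        nlinarith
    linarith

end Helpers

section Key

variable {X : Type*} [NormedAddCommGroup X] [NormedSpace ℝ X]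
variable {Y : Type*} [NormedAddCommGroup Y] [NormedSpace ℝ Y]

/-- The key inequality. -/
theorem key_ineq (ε : ℝ) (hε : 0 ≤ ε) (f : X → Y) (hf : StdEpsIsom ε f)
    (φx : X →ₗ[ℝ] ℝ) (hφx : ∀ x, |φx x| ≤ ‖x‖) (l : List (ℝ × X)) :
    φx ((l.map fun p => p.1 • p.2).sum) ≤
      ‖(l.map fun p => p.1 • f p.2).sum‖ + 4 * ε * (l.map fun p => |p.1|).sum := by
  classical
  set c : X := (l.map fun p => p.1 • p.2).sum with hc
  set V : Y := (l.map fun p => p.1 • f p.2).sum with hV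
  set T : ℝ := (l.map fun p => |p.1|).sum with hT
  have hT0 : 0 ≤ T := by
    apply List.sum_nonneg
    intro a ha
    simp only [List.mem_map] at ha
    obtain ⟨p, _, rfl⟩ := ha
    exact abs_nonneg _
  rcases le_or_gt (φx c) 0 with hneg | hpos
  · have : (0:ℝ) ≤ ‖V‖ + 4 * ε * T := by positivity
    linarith
  -- main case
  have hcne : c ≠ 0 := by
    intro h0
    rw [h0, map_zero] at hpos
    exact lt_irrefl _ hpos
  have hcnorm : (0:ℝ) < ‖c‖ := norm_pos_iff.mpr hcne
  -- it suffices to prove the bound with 3ε and arbitrary slack η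
  have main : ∀ η : ℝ, 0 < η → φx c ≤ ‖V‖ + 3 * ε * T + η := by
    intro η hη
    set δ₁ : ℝ := min (4⁻¹) (η / (4 * (‖c‖ + 1))) with hδ₁def
    have hδ₁pos : 0 < δ₁ := by
      apply lt_min (by norm_num)
      positivity
    have hδ₁le : δ₁ ≤ 4⁻¹ := min_le_left _ _
    set δ : ℝ := η / (2 * (T + 1)) with hδdef
    have hδpos : 0 < δ := by positivity
    -- the finite-dimensional subspace
    set s : Set X := {x | ∃ p ∈ l, p.2 = x} with hs
    have hsfin : s.Finite := by
      have : s = Prod.snd '' {p | p ∈ l} := by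
        ext x; simp [hs, eq_comm]
      rw [this]
      exact (l.finite_toSet).image _
    set W : Submodule ℝ X := Submodule.span ℝ s with hW
    haveI : FiniteDimensional ℝ W := FiniteDimensional.span_of_finite ℝ hsfin
    have hmemW : ∀ p ∈ l, p.2 ∈ W := fun p hp => Submodule.subset_span ⟨p, hp, rfl⟩
    have hcW : c ∈ W := by
      rw [hc]
      refine list_sum_mem ?_
      intro x hx
      simp only [List.mem_map] at hx
      obtain ⟨p, hp, rfl⟩ := hx
      exact Submodule.smul_mem _ _ (hmemW p hp)
    set cW : W := ⟨c, hcW⟩ with hcWdef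
    set chat : W := ‖c‖⁻¹ • cW with hchat
    have hchatnorm : ‖chat‖ = 1 := by
      rw [hchat, norm_smul, Real.norm_eq_abs, abs_of_pos (by positivity)]
      have : ‖cW‖ = ‖c‖ := rfl
      rw [this]
      field_simp
    -- differentiability point
    have hdense : Dense {w : W | DifferentiableAt ℝ (‖·‖) w} := dense_differentiableAt_norm
    obtain ⟨u, hu, hud⟩ := hdense.exists_dist_lt chat hδ₁pos
    have hudiff : DifferentiableAt ℝ (fun x : W => ‖x‖) u := hu
    have hdist : ‖u - chat‖ < δ₁ := by
      rw [← dist_eq_norm, dist_comm]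
      exact hud
    set L : W →L[ℝ] ℝ := fderiv ℝ (‖·‖) u with hL
    have hLd : HasFDerivAt (‖·‖) L u := hudiff.hasFDerivAt
    have hLb : ∀ w : W, |L w| ≤ ‖w‖ := fun w => fderiv_norm_bound hLd w
    have hLu : L u = ‖u‖ := fderiv_norm_self hLd
    set ν : ℝ := ‖u‖ with hν
    have hν1 : 1 - δ₁ ≤ ν := by
      have := norm_sub_norm_le u chat
      rw [hchatnorm] at this
      have h2 := hdist.le
      calc 1 - δ₁ ≤ 1 - ‖u - chat‖ := by linarith
        _ ≤ ν := by rw [hν]; linarith [abs_le.mp (abs_norm_sub_norm_le u chat)]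
    have hνpos : (0:ℝ) < ν := by
      have : δ₁ ≤ 4⁻¹ := hδ₁le
      linarith
    -- extension of L to all of X
    obtain ⟨g, hg, hgnorm⟩ := exists_extension_norm_eq W L
    have hgb : ∀ x : X, |g x| ≤ ‖x‖ := by
      intro x
      have h1 : ‖L‖ ≤ 1 := by
        apply ContinuousLinearMap.opNorm_le_bound _ zero_le_one
        intro w
        rw [Real.norm_eq_abs, one_mul]
        exact hLb w
      calc |g x| = ‖g x‖ := (Real.norm_eq_abs _).symm
        _ ≤ ‖g‖ * ‖x‖ := g.le_opNorm x
        _ ≤ 1 * ‖x‖ := by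
            apply mul_le_mul_of_nonneg_right _ (norm_nonneg x)
            rw [hgnorm]; exact h1
        _ = ‖x‖ := one_mul _
    -- eventual smallness conditions
    have hev1 : ∀ᶠ t in 𝓝[>] (0:ℝ), ∀ p ∈ l,
        ‖(u:X) + t • (-p.2)‖ ≤ ν + t * (-(g p.2) + δ) := by
      apply eventually_list
      intro p hp
      have := eventually_norm_smul_le hLd (-(⟨p.2, hmemW p hp⟩ : W)) hδpos
      filter_upwards [this] with t ht
      have hco : ‖u + t • (-(⟨p.2, hmemW p hp⟩ : W))‖ = ‖(u:X) + t • (-p.2)‖ := by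
        rw [Submodule.coe_norm]
        push_cast
        ring
      have hLval : L (-(⟨p.2, hmemW p hp⟩ : W)) = -(g p.2) := by
        rw [map_neg]
        congr 1
        exact (hg ⟨p.2, hmemW p hp⟩).symm
      rw [hco, hLval] at ht
      exact ht
    have hev2 : ∀ᶠ t in 𝓝[>] (0:ℝ), ∀ p ∈ l,
        ‖(u:X) + t • p.2‖ ≤ ν + t * (g p.2 + δ) := by
      apply eventually_list
      intro p hp
      have := eventually_norm_smul_le hLd ((⟨p.2, hmemW p hp⟩ : W)) hδpos
      filter_upwards [this] with t ht
      have hco : ‖u + t • ((⟨p.2, hmemW p hp⟩ : W))‖ = ‖(u:X) + t • p.2‖ := by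
        rw [Submodule.coe_norm]
        push_cast
        ring
      have hLval : L ((⟨p.2, hmemW p hp⟩ : W)) = g p.2 := (hg ⟨p.2, hmemW p hp⟩).symm
      rw [hco, hLval] at ht
      exact ht
    have hev3 : ∀ᶠ t in 𝓝[>] (0:ℝ), t * (ε + 1) < ν := by
      have hr : (0:ℝ) < ν / (ε + 1) := by positivity
      filter_upwards [Ioo_mem_nhdsGT_of_mem (Set.mem_Ico.mpr ⟨le_refl _, hr⟩)] with t ht
      have := ht.2
      rw [lt_div_iff₀ (by positivity)] at this
      exact this
    obtain ⟨sv, hsv1, hsv2, hsv3, hsvpos⟩ :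
        ∃ sv : ℝ, (∀ p ∈ l, ‖(u:X) + sv • (-p.2)‖ ≤ ν + sv * (-(g p.2) + δ)) ∧
          (∀ p ∈ l, ‖(u:X) + sv • p.2‖ ≤ ν + sv * (g p.2 + δ)) ∧
          sv * (ε + 1) < ν ∧ 0 < sv := by
      have := (hev1.and (hev2.and (hev3.and self_mem_nhdsWithin))).exists
      obtain ⟨sv, h1, h2, h3, h4⟩ := this
      exact ⟨sv, h1, h2, h3, h4⟩
    -- rescale: z = sv⁻¹ • u
    set t : ℝ := sv⁻¹ with htdef
    have htpos : 0 < t := by positivity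
    have hts : t * sv = 1 := inv_mul_cancel₀ (ne_of_gt hsvpos)
    set z : X := t • (u : X) with hz
    have hcoeu : ‖(u : X)‖ = ν := (Submodule.coe_norm u).symm
    have hznorm : ‖z‖ = t * ν := by
      rw [hz, norm_smul, Real.norm_eq_abs, abs_of_pos htpos, hcoeu]
    have hC1 : ∀ p ∈ l, ‖z - p.2‖ ≤ t * ν - g p.2 + δ := by
      intro p hp
      have h1 := hsv1 p hp
      have heq : z - p.2 = t • ((u : X) + sv • (-p.2)) := by
        rw [smul_add, smul_smul, hts, one_smul, sub_eq_add_neg]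
      rw [heq, norm_smul, Real.norm_eq_abs, abs_of_pos htpos]
      calc t * ‖(u : X) + sv • (-p.2)‖ ≤ t * (ν + sv * (-g p.2 + δ)) :=
            mul_le_mul_of_nonneg_left h1 htpos.le
        _ = t * ν + (t * sv) * (-g p.2 + δ) := by ring
        _ = t * ν - g p.2 + δ := by rw [hts]; ring
    have hC2 : ∀ p ∈ l, ‖z + p.2‖ ≤ t * ν + g p.2 + δ := by
      intro p hp
      have h1 := hsv2 p hp
      have heq : z + p.2 = t • ((u : X) + sv • p.2) := by
        rw [smul_add, smul_smul, hts, one_smul]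
      rw [heq, norm_smul, Real.norm_eq_abs, abs_of_pos htpos]
      calc t * ‖(u : X) + sv • p.2‖ ≤ t * (ν + sv * (g p.2 + δ)) :=
            mul_le_mul_of_nonneg_left h1 htpos.le
        _ = t * ν + (t * sv) * (g p.2 + δ) := by ring
        _ = t * ν + g p.2 + δ := by rw [hts]; ring
    have hC3 : ε + 1 < t * ν := by
      have := mul_lt_mul_of_pos_left hsv3 htpos
      calc ε + 1 = t * sv * (ε + 1) := by rw [hts]; ring
        _ = t * (sv * (ε + 1)) := by ring
        _ < t * ν := this
    -- the norming functional in Y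
    set v : Y := f z - f (-z) with hv
    have hfz : ‖f z‖ ≤ t * ν + ε := by
      have := hf.norm_le z; rw [hznorm] at this; exact this
    have hfzneg : ‖f (-z)‖ ≤ t * ν + ε := by
      have := hf.norm_le (-z); rw [norm_neg, hznorm] at this; exact this
    have hvlb : 2 * (t * ν) - ε ≤ ‖v‖ := by
      have h1 := hf.le_norm_sub z (-z)
      have h2 : ‖z - (-z)‖ = 2 * (t * ν) := by
        rw [sub_neg_eq_add, ← two_smul ℝ z, norm_smul, Real.norm_eq_abs, hznorm]
        norm_num
      rw [h2] at h1; exact h1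
    have hvne : v ≠ 0 := by
      have : (0:ℝ) < ‖v‖ := by linarith
      exact norm_pos_iff.mp this
    obtain ⟨ψ, hψn, hψv⟩ := exists_dual_vector ℝ v (norm_ne_zero_iff.mpr hvne)
    have hψv' : ψ v = ‖v‖ := by exact_mod_cast hψv
    have hψb : ∀ y : Y, |ψ y| ≤ ‖y‖ := by
      intro y
      calc |ψ y| = ‖ψ y‖ := (Real.norm_eq_abs _).symm
        _ ≤ ‖ψ‖ * ‖y‖ := ψ.le_opNorm y
        _ = ‖y‖ := by rw [hψn, one_mul]
    have hψsub : ψ v = ψ (f z) - ψ (f (-z)) := by rw [hv, map_sub]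
    have hψfz : t * ν - 2 * ε ≤ ψ (f z) := by
      have h1 := abs_le.mp (hψb (f (-z)))
      have h2 : ψ (f z) = ψ v + ψ (f (-z)) := by rw [hψsub]; ring
      rw [h2, hψv']
      linarith [h1.1]
    have hψfnz : ψ (f (-z)) ≤ -(t * ν) + 2 * ε := by
      have h1 := abs_le.mp (hψb (f z))
      have h2 : ψ (f (-z)) = ψ (f z) - ψ v := by rw [hψsub]; ring
      rw [h2, hψv']
      linarith [h1.2]
    have hA : ∀ p ∈ l, |ψ (f p.2) - g p.2| ≤ 3 * ε + δ := by
      intro p hp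
      have hlow : g p.2 - (3 * ε + δ) ≤ ψ (f p.2) := by
        have h1 : |ψ (f z) - ψ (f p.2)| ≤ ‖f z - f p.2‖ := by
          rw [← map_sub]; exact hψb _
        have h2 : ‖f z - f p.2‖ ≤ ‖z - p.2‖ + ε := hf.norm_sub_le z p.2
        have h3 := hC1 p hp
        have := abs_le.mp h1
        linarith [this.2]
      have hup : ψ (f p.2) ≤ g p.2 + (3 * ε + δ) := by
        have h1 : |ψ (f p.2) - ψ (f (-z))| ≤ ‖f p.2 - f (-z)‖ := by
          rw [← map_sub]; exact hψb _
        have h2 : ‖f p.2 - f (-z)‖ ≤ ‖p.2 - (-z)‖ + ε := hf.norm_sub_le p.2 (-z)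
        have h2' : ‖p.2 - (-z)‖ = ‖z + p.2‖ := by
          rw [sub_neg_eq_add, add_comm]
        have h3 := hC2 p hp
        have := abs_le.mp h1
        rw [h2'] at h2
        linarith [this.2]
      exact abs_le.mpr ⟨by linarith, by linarith⟩
    have hsum : ψ V = (l.map fun p => p.1 * ψ (f p.2)).sum := by
      rw [hV, map_list_sum, List.map_map]
      refine congrArg List.sum (List.map_congr_left ?_)
      intro p _
      simp [Function.comp, smul_eq_mul]
    have hgc : (l.map fun p => p.1 * g p.2).sum = g c := by
      rw [hc, map_list_sum, List.map_map]
      refine (congrArg List.sum (List.map_congr_left ?_)).symm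
      intro p _
      simp [Function.comp, smul_eq_mul]
    have hψV : g c - (3 * ε + δ) * T ≤ ψ V := by
      rw [hsum, ← hgc, hT]
      exact list_sum_bound (G := fun x => ψ (f x)) (H := fun x => g x) hA
    -- relating g c to φx c
    have hLchat : 1 - 2 * δ₁ ≤ L chat := by
      have h1 : L chat = L u - L (u - chat) := by rw [map_sub]; ring
      have h2 : |L (u - chat)| ≤ ‖u - chat‖ := hLb _
      have := abs_le.mp h2
      rw [h1, hLu]
      linarith [this.2, hdist.le]
    have hLcW : g c = ‖c‖ * L chat := by
      have h0 : g c = L cW := hg cW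
      have h1 : L chat = ‖c‖⁻¹ * L cW := by rw [hchat, map_smul, smul_eq_mul]
      rw [h0, h1]
      field_simp
    have hφxc : φx c ≤ ‖c‖ := le_trans (le_abs_self _) (hφx c)
    have h2δ₁ : 2 * δ₁ * ‖c‖ ≤ η / 2 := by
      have hd : δ₁ ≤ η / (4 * (‖c‖ + 1)) := min_le_right _ _
      have hpos4 : (0:ℝ) < 4 * (‖c‖ + 1) := by positivity
      have h1 : 2 * δ₁ * ‖c‖ ≤ 2 * (η / (4 * (‖c‖ + 1))) * ‖c‖ :=
        mul_le_mul_of_nonneg_right (by linarith) hcnorm.le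
      have he : 2 * (η / (4 * (‖c‖ + 1))) * (‖c‖ + 1) = η / 2 := by
        field_simp
        ring
      have h2 : 2 * (η / (4 * (‖c‖ + 1))) * ‖c‖ ≤ 2 * (η / (4 * (‖c‖ + 1))) * (‖c‖ + 1) := by
        have h0 : (0:ℝ) ≤ 2 * (η / (4 * (‖c‖ + 1))) := by positivity
        have h0' : ‖c‖ ≤ ‖c‖ + 1 := by linarith
        exact mul_le_mul_of_nonneg_left h0' h0
      linarith
    have hgcge : φx c - η / 2 ≤ g c := by
      have h1 : ‖c‖ * (1 - 2 * δ₁) ≤ ‖c‖ * L chat := by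
        apply mul_le_mul_of_nonneg_left hLchat hcnorm.le
      have h2 : ‖c‖ * (1 - 2 * δ₁) = ‖c‖ - 2 * δ₁ * ‖c‖ := by ring
      rw [hLcW]
      linarith
    have hδT : δ * T ≤ η / 2 := by
      have he : δ * (T + 1) = η / 2 := by
        rw [hδdef]
        field_simp
      have h0 : δ * T ≤ δ * (T + 1) := by
        have : T ≤ T + 1 := by linarith
        exact mul_le_mul_of_nonneg_left this hδpos.le
      linarith
    have hψVnorm : ψ V ≤ ‖V‖ := le_trans (le_abs_self _) (hψb V)
    have hfinal : φx c ≤ ‖V‖ + (3 * ε + δ) * T + η / 2 := by linarith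
    have hexp : (3 * ε + δ) * T = 3 * ε * T + δ * T := by ring
    linarith
  have h3 := le_of_forall_pos_le_add main
  have : 3 * ε * T ≤ 4 * ε * T := by nlinarith
  linarith
end Key

section HB

variable {X : Type*} [NormedAddCommGroup X] [NormedSpace ℝ X]
variable {Y : Type*} [NormedAddCommGroup Y] [NormedSpace ℝ Y]

lemma list_sum_map_neg {α M : Type*} [AddCommGroup M] (l : List α) (h : α → M) :
    (l.map fun a => -(h a)).sum = -(l.map h).sum := by
  induction l with
  | nil => simp
  | cons a t ih => simp [ih]; abel

theorem exists_phi (ε : ℝ) (hε : 0 ≤ ε) (f : X → Y) (hf : StdEpsIsom ε f)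
    (φx : X →ₗ[ℝ] ℝ) (hφx : ∀ x, |φx x| ≤ ‖x‖) :
    ∃ φ : Y →L[ℝ] ℝ, ‖φ‖ ≤ 1 ∧ ∀ x : X, |φ (f x) - φx x| ≤ 4 * ε := by
  classical
  set S : Y → Set ℝ := fun y => {r | ∃ l : List (ℝ × X),
    r = ‖y - (l.map fun p => p.1 • f p.2).sum‖ + (l.map fun p => p.1 * φx p.2).sum
      + 4 * ε * (l.map fun p => |p.1|).sum} with hS
  have hMφ : ∀ l : List (ℝ × X),
      (l.map fun p => p.1 * φx p.2).sum = φx ((l.map fun p => p.1 • p.2).sum) := by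
    intro l
    rw [map_list_sum, List.map_map]
    refine (congrArg List.sum (List.map_congr_left ?_)).symm
    intro p _
    simp [Function.comp, smul_eq_mul]
  have hSne : ∀ y, (S y).Nonempty := by
    intro y
    exact ⟨‖y‖, [], by simp⟩
  have hSlb : ∀ y, ∀ r ∈ S y, -‖y‖ ≤ r := by
    rintro y r ⟨l, rfl⟩
    have hkey := key_ineq ε hε f hf φx hφx (l.map fun p => (-p.1, p.2))
    rw [List.map_map, List.map_map, List.map_map] at hkey
    have e1 : (l.map ((fun p : ℝ × X => p.1 • p.2) ∘ fun p : ℝ × X => (-p.1, p.2))).sum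
        = -((l.map fun p : ℝ × X => p.1 • p.2).sum) := by
      rw [← list_sum_map_neg l (fun p : ℝ × X => p.1 • p.2)]
      refine congrArg List.sum (List.map_congr_left ?_)
      intro p _
      simp [Function.comp, neg_smul]
    have e2 : (l.map ((fun p : ℝ × X => p.1 • f p.2) ∘ fun p : ℝ × X => (-p.1, p.2))).sum
        = -((l.map fun p : ℝ × X => p.1 • f p.2).sum) := by
      rw [← list_sum_map_neg l (fun p : ℝ × X => p.1 • f p.2)]
      refine congrArg List.sum (List.map_congr_left ?_)
      intro p _
      simp [Function.comp, neg_smul]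
    have e3 : (l.map ((fun p : ℝ × X => |p.1|) ∘ fun p : ℝ × X => (-p.1, p.2))).sum
        = (l.map fun p : ℝ × X => |p.1|).sum := by
      refine congrArg List.sum (List.map_congr_left ?_)
      intro p _
      simp [Function.comp]
    rw [e1, e2, e3, map_neg, norm_neg] at hkey
    have hM := hMφ l
    have htri : ‖(l.map fun p => p.1 • f p.2).sum‖ - ‖y‖ ≤
        ‖y - (l.map fun p => p.1 • f p.2).sum‖ := by
      have := norm_sub_norm_le ((l.map fun p => p.1 • f p.2).sum) y
      have h2 : (l.map fun p => p.1 • f p.2).sum - y = -(y - (l.map fun p => p.1 • f p.2).sum) := by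
        abel
      rw [h2, norm_neg] at this
      linarith
    rw [hM]
    linarith
  have hbdd : ∀ y, BddBelow (S y) := fun y => ⟨-‖y‖, fun r hr => hSlb y r hr⟩
  set p : Y → ℝ := fun y => sInf (S y) with hp
  have hple : ∀ y, p y ≤ ‖y‖ := by
    intro y
    apply csInf_le (hbdd y)
    exact ⟨[], by simp⟩
  have hplb : ∀ y, -‖y‖ ≤ p y := fun y => le_csInf (hSne y) (fun r hr => hSlb y r hr)
  -- subadditivity
  have hadd : ∀ y₁ y₂, p (y₁ + y₂) ≤ p y₁ + p y₂ := by
    intro y₁ y₂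
    have hpair : ∀ r₁ ∈ S y₁, ∀ r₂ ∈ S y₂, p (y₁ + y₂) ≤ r₁ + r₂ := by
      rintro r₁ ⟨l₁, rfl⟩ r₂ ⟨l₂, rfl⟩
      have hmem : ‖(y₁ + y₂) - ((l₁ ++ l₂).map fun p => p.1 • f p.2).sum‖
          + ((l₁ ++ l₂).map fun p => p.1 * φx p.2).sum
          + 4 * ε * ((l₁ ++ l₂).map fun p => |p.1|).sum ∈ S (y₁ + y₂) := ⟨l₁ ++ l₂, rfl⟩
      have hle := csInf_le (hbdd (y₁ + y₂)) hmem
      rw [List.map_append, List.map_append, List.map_append,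
        List.sum_append, List.sum_append, List.sum_append] at hle
      have htri : ‖(y₁ + y₂) - ((l₁.map fun p => p.1 • f p.2).sum
          + (l₂.map fun p => p.1 • f p.2).sum)‖ ≤
          ‖y₁ - (l₁.map fun p => p.1 • f p.2).sum‖ +
          ‖y₂ - (l₂.map fun p => p.1 • f p.2).sum‖ := by
        have heq : (y₁ + y₂) - ((l₁.map fun p => p.1 • f p.2).sum
            + (l₂.map fun p => p.1 • f p.2).sum)
            = (y₁ - (l₁.map fun p => p.1 • f p.2).sum)
            + (y₂ - (l₂.map fun p => p.1 • f p.2).sum) := by abel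
        rw [heq]
        exact norm_add_le _ _
      calc p (y₁ + y₂) ≤ _ := hle
        _ ≤ _ := by nlinarith [htri]
    have h1 : ∀ r₁ ∈ S y₁, p (y₁ + y₂) - r₁ ≤ p y₂ := by
      intro r₁ h₁
      apply le_csInf (hSne y₂)
      intro r₂ h₂
      linarith [hpair r₁ h₁ r₂ h₂]
    have h2 : p (y₁ + y₂) - p y₂ ≤ p y₁ := by
      apply le_csInf (hSne y₁)
      intro r₁ h₁
      linarith [h1 r₁ h₁]
    linarith
  -- positive homogeneity
  have hsmulmem : ∀ (c : ℝ), 0 < c → ∀ y, ∀ r ∈ S y, c * r ∈ S (c • y) := by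
    rintro c hc y r ⟨l, rfl⟩
    refine ⟨l.map fun p => (c * p.1, p.2), ?_⟩
    rw [List.map_map, List.map_map, List.map_map]
    have e1 : (l.map ((fun p : ℝ × X => p.1 • f p.2) ∘ fun p : ℝ × X => (c * p.1, p.2))).sum
        = c • ((l.map fun p : ℝ × X => p.1 • f p.2).sum) := by
      rw [List.smul_sum, List.map_map]
      refine congrArg List.sum (List.map_congr_left ?_)
      intro p _
      simp [Function.comp, mul_smul]
    have e2 : (l.map ((fun p : ℝ × X => p.1 * φx p.2) ∘ fun p : ℝ × X => (c * p.1, p.2))).sum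
        = c * ((l.map fun p : ℝ × X => p.1 * φx p.2).sum) := by
      rw [← List.sum_map_mul_left]
      refine congrArg List.sum (List.map_congr_left ?_)
      intro p _
      simp [Function.comp]
      ring
    have e3 : (l.map ((fun p : ℝ × X => |p.1|) ∘ fun p : ℝ × X => (c * p.1, p.2))).sum
        = c * ((l.map fun p : ℝ × X => |p.1|).sum) := by
      rw [← List.sum_map_mul_left]
      refine congrArg List.sum (List.map_congr_left ?_)
      intro p _
      simp [Function.comp, abs_mul, abs_of_pos hc]
    rw [e1, e2, e3]
    have e4 : ‖c • y - c • ((l.map fun p : ℝ × X => p.1 • f p.2).sum)‖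
        = c * ‖y - (l.map fun p : ℝ × X => p.1 • f p.2).sum‖ := by
      rw [← smul_sub, norm_smul, Real.norm_eq_abs, abs_of_pos hc]
    rw [e4]
    ring
  have hhom : ∀ (c : ℝ), 0 < c → ∀ y, p (c • y) = c * p y := by
    intro c hc y
    have hle1 : p (c • y) ≤ c * p y := by
      have h1 : p (c • y) / c ≤ p y := by
        apply le_csInf (hSne y)
        intro r hr
        have := csInf_le (hbdd (c • y)) (hsmulmem c hc y r hr)
        rw [div_le_iff₀ hc]
        linarith [this]
      calc p (c • y) = c * (p (c • y) / c) := by field_simp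
        _ ≤ c * p y := mul_le_mul_of_nonneg_left h1 hc.le
    have hle2 : c * p y ≤ p (c • y) := by
      have hcinv : 0 < c⁻¹ := by positivity
      have h3 : c⁻¹ • (c • y) = y := by
        rw [smul_smul, inv_mul_cancel₀ (ne_of_gt hc), one_smul]
      apply le_csInf (hSne (c • y))
      intro r hr
      have h4 : c⁻¹ * r ∈ S y := by
        have := hsmulmem c⁻¹ hcinv (c • y) r hr
        rwa [h3] at this
      have h5 : p y ≤ c⁻¹ * r := csInf_le (hbdd y) h4
      calc c * p y ≤ c * (c⁻¹ * r) := mul_le_mul_of_nonneg_left h5 hc.le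
        _ = r := by field_simp
    linarith
  -- Hahn-Banach
  obtain ⟨gl, -, hgl⟩ := exists_extension_of_le_sublinear ⟨⊥, 0⟩ p hhom hadd
    (by
      rintro ⟨x, hx⟩
      have hx0 : x = 0 := by simpa using hx
      have : (0:ℝ) ≤ p x := by
        rw [hx0]
        have := hplb 0
        simpa using this
      simpa using this)
  have habs : ∀ y : Y, |gl y| ≤ ‖y‖ := by
    intro y
    have h1 : gl y ≤ ‖y‖ := le_trans (hgl y) (hple y)
    have h2 : -gl y ≤ ‖y‖ := by
      have := le_trans (hgl (-y)) (hple (-y))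
      rwa [map_neg, norm_neg] at this
    exact abs_le.mpr ⟨by linarith, h1⟩
  refine ⟨gl.mkContinuous 1 (fun y => by simpa using habs y), ?_, ?_⟩
  · exact gl.mkContinuous_norm_le zero_le_one _
  · intro x
    have hup : gl (f x) ≤ φx x + 4 * ε := by
      refine le_trans (hgl (f x)) ?_
      refine le_trans (csInf_le (hbdd (f x)) ⟨[(1, x)], rfl⟩) ?_
      simp
    have hlow : -gl (f x) ≤ -φx x + 4 * ε := by
      have h1 : gl (-f x) ≤ p (-f x) := hgl (-f x)
      rw [map_neg] at h1
      refine le_trans h1 ?_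
      refine le_trans (csInf_le (hbdd (-f x)) ⟨[(-1, x)], rfl⟩) ?_
      simp
    have : (gl.mkContinuous 1 (fun y => by simpa using habs y)) (f x) = gl (f x) := rfl
    rw [this]
    exact abs_le.mpr ⟨by linarith, by linarith⟩

end HB


end AuxCDZ

universe u v

/-- If `X` is a closed subspace of `ℓ∞(Γ)` and `f : X → Y` is a standard ε-isometry, then
there is a bounded linear operator `S : Y → ℓ∞(Γ)` with `‖S‖ ≤ 1` and
`‖S (f x) - x‖ ≤ 4 ε` for all `x ∈ X`. -/
theorem stmt12 {Γ : Type u} [Nonempty Γ]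
    {Y : Type v} [NormedAddCommGroup Y] [NormedSpace ℝ Y] [CompleteSpace Y]
    (X : Submodule ℝ (lp (fun _ : Γ => ℝ) ∞)) (hXc : IsClosed (X : Set (lp (fun _ : Γ => ℝ) ∞)))
    (ε : ℝ) (hε : 0 ≤ ε) (f : X → Y) (hf : StdEpsIsom ε f) :
    ∃ S : Y →L[ℝ] lp (fun _ : Γ => ℝ) ∞, ‖S‖ ≤ 1 ∧
      ∀ x : X, ‖S (f x) - (x : lp (fun _ : Γ => ℝ) ∞)‖ ≤ 4 * ε := by

  classical
  -- the coordinate functionals on X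
  have heval : ∀ γ : Γ, ∃ φx : X →ₗ[ℝ] ℝ, (∀ x : X, φx x = (x : lp (fun _ : Γ => ℝ) ∞) γ)
      ∧ ∀ x : X, |φx x| ≤ ‖x‖ := by
    intro γ
    refine ⟨{ toFun := fun x => (x : lp (fun _ : Γ => ℝ) ∞) γ
              map_add' := by
                intro a b
                push_cast
                rfl
              map_smul' := by
                intro c a
                push_cast
                rfl }, fun x => rfl, ?_⟩
    intro x
    have h1 : ‖(x : lp (fun _ : Γ => ℝ) ∞) γ‖ ≤ ‖(x : lp (fun _ : Γ => ℝ) ∞)‖ :=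
      lp.norm_apply_le_norm ENNReal.top_ne_zero _ γ
    rw [Real.norm_eq_abs] at h1
    exact h1.trans_eq (Submodule.coe_norm x).symm
  choose evalL hevalL hevalB using heval
  choose φ hφn hφb using fun γ : Γ => exists_phi ε hε f hf (evalL γ) (hevalB γ)
  -- bound for building elements of ℓ∞
  have hbd : ∀ y : Y, ∀ γ : Γ, ‖φ γ y‖ ≤ ‖y‖ := by
    intro y γ
    calc ‖φ γ y‖ ≤ ‖φ γ‖ * ‖y‖ := (φ γ).le_opNorm y
      _ ≤ 1 * ‖y‖ := mul_le_mul_of_nonneg_right (hφn γ) (norm_nonneg y)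
      _ = ‖y‖ := one_mul _
  have hmem : ∀ y : Y, Memℓp (fun γ => φ γ y) ∞ := by
    intro y
    apply memℓp_infty
    refine ⟨‖y‖, ?_⟩
    rintro - ⟨γ, rfl⟩
    exact hbd y γ
  set Slin : Y →ₗ[ℝ] lp (fun _ : Γ => ℝ) ∞ :=
    { toFun := fun y => ⟨fun γ => φ γ y, hmem y⟩
      map_add' := by
        intro a b
        apply lp.ext
        funext γ
        have : ((⟨fun γ => φ γ (a + b), hmem (a+b)⟩ : lp (fun _ : Γ => ℝ) ∞) : ∀ _, ℝ) γ
            = φ γ (a + b) := rfl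
        simp only [map_add]
        rfl
      map_smul' := by
        intro c a
        apply lp.ext
        funext γ
        simp only [map_smul]
        rfl } with hSlin
  have hSlinb : ∀ y : Y, ‖Slin y‖ ≤ 1 * ‖y‖ := by
    intro y
    rw [one_mul]
    apply lp.norm_le_of_forall_le (norm_nonneg y)
    intro γ
    exact hbd y γ
  refine ⟨Slin.mkContinuous 1 hSlinb, ?_, ?_⟩
  · exact Slin.mkContinuous_norm_le zero_le_one _
  · intro x
    apply lp.norm_le_of_forall_le (by positivity)
    intro γ
    have hcoord : ((Slin.mkContinuous 1 hSlinb (f x) - (x : lp (fun _ : Γ => ℝ) ∞)) : ∀ _, ℝ) γ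
        = φ γ (f x) - (x : lp (fun _ : Γ => ℝ) ∞) γ := by
      rw [lp.coeFn_sub]
      rfl
    rw [hcoord]
    have := hφb γ x
    rw [hevalL γ x] at this
    simpa [Real.norm_eq_abs] using this
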